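/- arXiv:2509.10613 — 5 statements merged into one kernel-verified Lean document; each statement's English description precedes it below -/
import Mathlib

section
/- (Chen's identity.) Let x : [a,b] → ℝ^d and y : [b,c] → ℝ^d be C¹ paths with x_b = y_b, and let x * y : [a,c] → ℝ^d denote their concatenation. Then for every n ≥ 0, the level-n signature of the concatenation satisfies S(x * y)^{(n)}_{[a,c]} = Σ_{i+j=n} S(x)^{(i)}_{[a,b]} ⊗ S(y)^{(j)}_{[b,c]}. -/
open MeasureTheory Topology

/-- Coordinates (in the standard tensor basis, i.e. indexed by words over the
alphabet `Fin d`) of the iterated-integral signature of a path `x` over the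
interval `[a, b]`.  `sigCoord x b w a` is the coordinate indexed by the word
`w` of the signature of `x` over `[a, b]`:
`∫_{a < t₁ < ⋯ < t_k < b} x'_{w₁}(t₁) ⋯ x'_{w_k}(t_k)`.
The empty word gives the level-0 signature `1`. -/
noncomputable def sigCoord {d : ℕ} (x : ℝ → Fin d → ℝ) (b : ℝ) :
    List (Fin d) → ℝ → ℝ
  | [], _ => 1
  | i :: w, a => ∫ u in a..b, deriv (fun s => x s i) u * sigCoord x b w u

namespace ChenAux

lemma ae_ne (b : ℝ) : ∀ᵐ t : ℝ ∂volume, t ≠ b := by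
  rw [Filter.eventually_iff, mem_ae_iff]
  have : {t : ℝ | t ≠ b}ᶜ = {b} := by ext t; simp
  rw [this]
  exact measure_singleton b

/-- Away from the endpoints, the `deriv` of a component of
a `C¹`-on-`[a,b]` path coincides with a function continuous on `[a,b]`. -/
lemma deriv_replace {d : ℕ} (a b : ℝ) (x : ℝ → Fin d → ℝ)
    (hx : ContDiffOn ℝ 1 x (Set.Icc a b)) (i : Fin d) :
    ∃ f : ℝ → ℝ, ContinuousOn f (Set.Icc a b) ∧
      ∀ t ∈ Set.Ioo a b, deriv (fun s => x s i) t = f t := by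
  have hxi : ContDiffOn ℝ 1 (fun s => x s i) (Set.Icc a b) := by
    have := contDiffOn_pi.mp hx
    exact this i
  refine ⟨derivWithin (fun s => x s i) (Set.Icc a b), ?_, ?_⟩
  · rcases lt_or_ge a b with h | h
    · exact hxi.continuousOn_derivWithin (uniqueDiffOn_Icc h) le_rfl
    · intro t ht
      have hsub : Set.Icc a b ⊆ {t} := by
        intro s hs
        have : s = t := le_antisymm (hs.2.trans (h.trans ht.1)) (ht.2.trans (h.trans hs.1))
        simp [this]
      exact continuousWithinAt_singleton.mono hsub
  · intro t ht
    have hmem : Set.Icc a b ∈ 𝓝 t := Icc_mem_nhds ht.1 ht.2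
    exact (derivWithin_of_mem_nhds hmem).symm

/-- The a.e. identification of `deriv x_i * S` with its continuous replacement
`f * S` on a subinterval `[u, b]` of `[a, b]`. -/
lemma ae_eq_repl {d : ℕ} (a b : ℝ) (x : ℝ → Fin d → ℝ) (i : Fin d)
    (f : ℝ → ℝ) (hf : ∀ t ∈ Set.Ioo a b, deriv (fun s => x s i) t = f t)
    (S : ℝ → ℝ) (u : ℝ) (hu : u ∈ Set.Icc a b) :
    ∀ᵐ t : ℝ ∂volume, t ∈ Set.uIoc u b →
      deriv (fun s => x s i) t * S t = f t * S t := by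
  filter_upwards [ae_ne b] with t htb ht
  rw [Set.uIoc_of_le hu.2] at ht
  have : t ∈ Set.Ioo a b := ⟨lt_of_le_of_lt hu.1 ht.1, lt_of_le_of_ne ht.2 htb⟩
  rw [hf t this]

/-- If `S` is continuous on `[a,b]`, then `t ↦ x'_i(t) * S t` is interval
integrable on any `[u, b] ⊆ [a, b]`. -/
lemma integrand_II {d : ℕ} (a b : ℝ) (x : ℝ → Fin d → ℝ)
    (hx : ContDiffOn ℝ 1 x (Set.Icc a b)) (i : Fin d)
    (S : ℝ → ℝ) (hS : ContinuousOn S (Set.Icc a b))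
    (u : ℝ) (hu : u ∈ Set.Icc a b) :
    IntervalIntegrable (fun t => deriv (fun s => x s i) t * S t) volume u b := by
  obtain ⟨f, hfc, hf⟩ := deriv_replace a b x hx i
  have hII : IntervalIntegrable (fun t => f t * S t) volume u b := by
    apply ContinuousOn.intervalIntegrable
    apply ContinuousOn.mono (hfc.mul hS)
    rw [Set.uIcc_of_le hu.2]
    exact Set.Icc_subset_Icc hu.1 le_rfl
  refine hII.congr_ae ?_
  have h := ae_eq_repl a b x i f hf S u hu
  exact ((ae_restrict_mem measurableSet_uIoc).mp
    (ae_restrict_of_ae h)).mono fun t ht => (ht.symm)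

/-- Continuity on `[a,b]` of all the signature coordinates of a `C¹` path. -/
lemma sig_cont {d : ℕ} (a b : ℝ) (hab : a ≤ b) (x : ℝ → Fin d → ℝ)
    (hx : ContDiffOn ℝ 1 x (Set.Icc a b)) :
    ∀ w : List (Fin d),
      ContinuousOn (fun u => sigCoord x b w u) (Set.Icc a b) := by
  intro w
  induction w with
  | nil =>
    simp only [sigCoord]
    exact continuousOn_const
  | cons j w ih =>
    obtain ⟨f, hfc, hf⟩ := deriv_replace a b x hx j
    have hint : IntegrableOn (fun t => f t * sigCoord x b w t) (Set.uIcc a b) volume := by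
      rw [Set.uIcc_of_le hab]
      exact (hfc.mul ih).integrableOn_Icc
    have hcont := intervalIntegral.continuousOn_primitive_interval_left hint
    rw [Set.uIcc_of_le hab] at hcont
    apply hcont.congr
    intro u hu
    show sigCoord x b (j :: w) u = ∫ t in u..b, f t * sigCoord x b w t
    simp only [sigCoord]
    exact intervalIntegral.integral_congr_ae
      (ae_eq_repl a b x j f hf (fun t => sigCoord x b w t) u hu)

/-- The signature coordinates of the concatenated path, evaluated at base points in
`[b, c]`, only depend on the second path. -/
lemma sig_concat_right {d : ℕ} (b c : ℝ) (y z : ℝ → Fin d → ℝ)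
    (hzy : ∀ t, b < t → z t = y t) :
    ∀ (w : List (Fin d)), ∀ u ∈ Set.Icc b c,
      sigCoord z c w u = sigCoord y c w u := by
  intro w
  induction w with
  | nil => intro u _; simp only [sigCoord]
  | cons j w ih =>
    intro u hu
    simp only [sigCoord]
    refine intervalIntegral.integral_congr_ae (Filter.Eventually.of_forall ?_)
    intro t ht
    rw [Set.uIoc_of_le hu.2] at ht
    have htb : b < t := lt_of_le_of_lt hu.1 ht.1
    have hderiv : deriv (fun s => z s j) t = deriv (fun s => y s j) t := by
      apply Filter.EventuallyEq.deriv_eq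
      filter_upwards [lt_mem_nhds htb] with s hs
      rw [hzy s hs]
    rw [hderiv, ih t ⟨le_of_lt htb, ht.2⟩]

/-- The key induction: Chen's identity for all words, at all base points in `[a, b]`. -/
lemma chen_aux {d : ℕ} (a b c : ℝ) (hab : a ≤ b) (hbc : b ≤ c)
    (x y z : ℝ → Fin d → ℝ)
    (hx : ContDiffOn ℝ 1 x (Set.Icc a b)) (hy : ContDiffOn ℝ 1 y (Set.Icc b c))
    (hzx : ∀ t, t < b → z t = x t) (hzy : ∀ t, b < t → z t = y t) :
    ∀ (w : List (Fin d)), ∀ u ∈ Set.Icc a b,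
      sigCoord z c w u = ∑ i ∈ Finset.range (w.length + 1),
          sigCoord x b (w.take i) u * sigCoord y c (w.drop i) b := by
  intro w
  induction w with
  | nil => intro u _; simp [sigCoord]
  | cons j w ih =>
    intro u hu
    set n := w.length with hn
    set C : ℕ → ℝ := fun i => sigCoord y c (w.drop i) b with hC
    -- the integrand over `[u, c]`
    set gZ : ℝ → ℝ := fun t => deriv (fun s => z s j) t * sigCoord z c w t with hgZ
    -- derivative identifications in the interior of each interval
    have hdx : ∀ t, t < b → deriv (fun s => z s j) t = deriv (fun s => x s j) t := by
      intro t ht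
      apply Filter.EventuallyEq.deriv_eq
      filter_upwards [gt_mem_nhds ht] with s hs
      rw [hzx s hs]
    have hdy : ∀ t, b < t → deriv (fun s => z s j) t = deriv (fun s => y s j) t := by
      intro t ht
      apply Filter.EventuallyEq.deriv_eq
      filter_upwards [lt_mem_nhds ht] with s hs
      rw [hzy s hs]
    -- on `(b, c]` the integrand agrees with that of `y`
    have hbc_eq : ∀ t ∈ Set.uIoc b c, gZ t
        = deriv (fun s => y s j) t * sigCoord y c w t := by
      intro t ht
      rw [Set.uIoc_of_le hbc] at ht
      rw [hgZ]
      simp only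
      rw [hdy t ht.1, sig_concat_right b c y z hzy w t ⟨le_of_lt ht.1, ht.2⟩]
    -- on `(u, b)` the integrand agrees with the sum expression from `x`
    set G : ℝ → ℝ := fun t => ∑ i ∈ Finset.range (n + 1),
        (deriv (fun s => x s j) t * sigCoord x b (w.take i) t) * C i with hG
    have hub_eq : ∀ᵐ t : ℝ ∂volume, t ∈ Set.uIoc u b → gZ t = G t := by
      filter_upwards [ae_ne b] with t htb ht
      rw [Set.uIoc_of_le hu.2] at ht
      have htIoo : t ∈ Set.Ioo a b :=
        ⟨lt_of_le_of_lt hu.1 ht.1, lt_of_le_of_ne ht.2 htb⟩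
      rw [hgZ]
      simp only
      rw [hdx t htIoo.2, ih t ⟨le_of_lt htIoo.1, le_of_lt htIoo.2⟩, hG]
      rw [Finset.mul_sum]
      exact Finset.sum_congr rfl fun i _ => by ring
    -- interval integrability of the pieces
    have hGint : IntervalIntegrable G volume u b := by
      rw [hG]
      have h := IntervalIntegrable.sum (μ := volume) (a := u) (b := b) (Finset.range (n + 1))
        (f := fun i t => (deriv (fun s => x s j) t * sigCoord x b (w.take i) t) * C i)
        (fun i _ => (integrand_II a b x hx j (fun t => sigCoord x b (w.take i) t)
          (sig_cont a b hab x hx (w.take i)) u hu).mul_const (C i))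
      rw [Finset.sum_fn] at h
      exact h
    have hIub : IntervalIntegrable gZ volume u b := by
      refine hGint.congr_ae ?_
      exact ((ae_restrict_mem measurableSet_uIoc).mp
        (ae_restrict_of_ae hub_eq)).mono fun t ht => ht.symm
    have hYint : IntervalIntegrable
        (fun t => deriv (fun s => y s j) t * sigCoord y c w t) volume b c := by
      have := integrand_II b c y hy j (fun t => sigCoord y c w t)
        (sig_cont b c hbc y hy w) b ⟨le_rfl, hbc⟩
      -- `integrand_II` gives integrability on `[b, c]`... with endpoints (b, c)
      -- but stated as (u, b); we need a version on `[b, c]`.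
      exact this
    have hIbc : IntervalIntegrable gZ volume b c := by
      refine hYint.congr_ae ?_
      exact (ae_restrict_mem measurableSet_uIoc).mono fun t ht => (hbc_eq t ht).symm
    -- split the integral
    have hsplit : (∫ t in u..c, gZ t) = (∫ t in u..b, gZ t) + ∫ t in b..c, gZ t :=
      (intervalIntegral.integral_add_adjacent_intervals hIub hIbc).symm
    -- compute the two pieces
    have hpiece2 : (∫ t in b..c, gZ t) = sigCoord y c (j :: w) b := by
      have hh : sigCoord y c (j :: w) b
          = ∫ t in b..c, deriv (fun s => y s j) t * sigCoord y c w t := by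
        simp only [sigCoord]
      rw [hh]
      exact intervalIntegral.integral_congr_ae (Filter.Eventually.of_forall hbc_eq)
    have hpiece1 : (∫ t in u..b, gZ t)
        = ∑ i ∈ Finset.range (n + 1), sigCoord x b (j :: w.take i) u * C i := by
      rw [intervalIntegral.integral_congr_ae hub_eq, hG]
      beta_reduce
      rw [intervalIntegral.integral_finset_sum (f := fun i t =>
        (deriv (fun s => x s j) t * sigCoord x b (w.take i) t) * C i)
        (fun i _ => (integrand_II a b x hx j (fun t => sigCoord x b (w.take i) t)
          (sig_cont a b hab x hx (w.take i)) u hu).mul_const (C i))]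
      refine Finset.sum_congr rfl fun i _ => ?_
      rw [intervalIntegral.integral_mul_const]
      simp only [sigCoord]
    -- assemble
    have hLHS : sigCoord z c (j :: w) u = ∫ t in u..c, gZ t := by
      rw [hgZ]; simp only [sigCoord]
    rw [hLHS, hsplit, hpiece1, hpiece2]
    conv_rhs => rw [List.length_cons, Finset.sum_range_succ']
    have h0 : sigCoord x b ([] : List (Fin d)) u = 1 := rfl
    simp only [List.take_succ_cons, List.drop_succ_cons, List.take_zero,
      List.drop_zero, h0, one_mul, hC, hn]

end ChenAux

/-- **Chen's identity.**  Let `x` be a C¹ path on `[a, b]` and `y` a C¹ path on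
`[b, c]` with `x b = y b`, and let `z = x * y` be their concatenation on
`[a, c]`.  Then for every `n ≥ 0`,
`S(x * y)^{(n)}_{[a,c]} = Σ_{i+j=n} S(x)^{(i)}_{[a,b]} ⊗ S(y)^{(j)}_{[b,c]}`.
In coordinates: for every word `w` of length `n`, the coordinate of the
signature of the concatenation indexed by `w` is the sum over all splittings
`w = w₁ ++ w₂` (with `w₁ = w.take i`, `w₂ = w.drop i`) of the product of the
corresponding coordinates of `S(x)` and `S(y)`. -/
theorem chen_identity {d : ℕ} (a b c : ℝ) (hab : a ≤ b) (hbc : b ≤ c)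
    (x y : ℝ → Fin d → ℝ)
    (hx : ContDiffOn ℝ 1 x (Set.Icc a b)) (hy : ContDiffOn ℝ 1 y (Set.Icc b c))
    (hxy : x b = y b)
    (z : ℝ → Fin d → ℝ) (hz : z = fun t => if t ≤ b then x t else y t) :
    ∀ (n : ℕ) (w : List (Fin d)), w.length = n →
      sigCoord z c w a =
        ∑ i ∈ Finset.range (n + 1),
          sigCoord x b (w.take i) a * sigCoord y c (w.drop i) b := by
  intro n w hw
  subst hw
  have hzx : ∀ t, t < b → z t = x t := by
    intro t ht; rw [hz]; simp [le_of_lt ht]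
  have hzy : ∀ t, b < t → z t = y t := by
    intro t ht; rw [hz]; simp [not_le.mpr ht]
  exact ChenAux.chen_aux a b c hab hbc x y z hx hy hzx hzy w a ⟨le_rfl, hab⟩
end

section
/- Let x : [t₀, t_L] → ℝ^d be the piecewise linear path interpolating points x₀, x₁, …, x_L ∈ ℝ^d at times t₀ < t₁ < ⋯ < t_L, and write Δx^ℓ = x_ℓ − x_{ℓ−1}. Then for every n ≥ 0, the level-n signature of x satisfies S(x)^{(n)} = Σ_{k₁+⋯+k_L = n} (Δx¹)^{⊗k₁}/k₁! ⊗ (Δx²)^{⊗k₂}/k₂! ⊗ ⋯ ⊗ (Δx^L)^{⊗k_L}/k_L!, where the sum is over all tuples of non-negative integers (k₁,…,k_L) summing to n. Equivalently, the signature of a piecewise linear path is the tensor product of the tensor exponentials of its increments: S(x) = exp(Δx¹) ⊗ ⋯ ⊗ exp(Δx^L). -/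
open MeasureTheory

/-- The "tensor product of exponentials of increments" expression, computed
recursively over the list of increments. -/
noncomputable def rhsL {d : ℕ} : List (Fin d → ℝ) → List (Fin d) → ℝ
  | [], w => if w = [] then 1 else 0
  | v :: vs, w => ∑ j ∈ Finset.range (w.length + 1),
      ((w.take j).map v).prod / (Nat.factorial j : ℝ) * rhsL vs (w.drop j)

/-- On a segment where the path is affine, the integrand of the signature
recursion is a.e. equal to an explicit continuous function; this gives both
integrability and the value of the integral. -/
lemma seg_key {d : ℕ} (x : ℝ → Fin d → ℝ) (b a c : ℝ) (hac : a < c)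
    (X0 Δ : Fin d → ℝ)
    (hx : ∀ s ∈ Set.Icc a c, x s = X0 + ((s - a) / (c - a)) • Δ)
    (i : Fin d) (w : List (Fin d)) (φ : ℝ → ℝ) (hφ : Continuous φ)
    (hw : ∀ u ∈ Set.Icc a c, sigCoord x b w u = φ u)
    (s : ℝ) (hs : s ∈ Set.Icc a c) :
    IntervalIntegrable (fun u => deriv (fun r => x r i) u * sigCoord x b w u) volume s c ∧
    (∫ u in s..c, deriv (fun r => x r i) u * sigCoord x b w u) =
      ∫ u in s..c, (Δ i / (c - a)) * φ u := by
  have hne : ∀ᵐ u : ℝ, u ≠ c := by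
    exact compl_mem_ae_iff.mpr (measure_singleton c)
  have key : ∀ᵐ u : ℝ, u ∈ Set.uIoc s c →
      deriv (fun r => x r i) u * sigCoord x b w u = (Δ i / (c - a)) * φ u := by
    filter_upwards [hne] with u hu hmem
    rw [Set.uIoc_of_le hs.2] at hmem
    have hu1 : u ∈ Set.Ioo a c := ⟨lt_of_le_of_lt hs.1 hmem.1, lt_of_le_of_ne hmem.2 hu⟩
    have huIcc : u ∈ Set.Icc a c := ⟨le_of_lt hu1.1, le_of_lt hu1.2⟩
    have hderiv : deriv (fun r => x r i) u = Δ i / (c - a) := by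
      have hev : (fun r => x r i) =ᶠ[nhds u] fun r => X0 i + (r - a) / (c - a) * Δ i := by
        filter_upwards [Ioo_mem_nhds hu1.1 hu1.2] with r hr
        rw [hx r ⟨le_of_lt hr.1, le_of_lt hr.2⟩]
        simp [smul_eq_mul]
      rw [hev.deriv_eq]
      have hda : HasDerivAt (fun r => X0 i + (r - a) / (c - a) * Δ i)
          (1 / (c - a) * Δ i) u := by
        simpa using
          ((((hasDerivAt_id u).sub_const a).div_const (c - a)).mul_const (Δ i)).const_add (X0 i)
      rw [hda.deriv]; ring
    rw [hderiv, hw u huIcc]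
  have hrestrict : (fun u => deriv (fun r => x r i) u * sigCoord x b w u)
      =ᵐ[volume.restrict (Set.uIoc s c)] fun u => Δ i / (c - a) * φ u :=
    (ae_restrict_iff' measurableSet_uIoc).mpr key
  refine ⟨((continuous_const.mul hφ).intervalIntegrable s c).congr_ae hrestrict.symm, ?_⟩
  exact intervalIntegral.integral_congr_ae key

/-- Continuity of the explicit formula for the signature on an affine segment. -/
lemma seg_phi_cont {d : ℕ} (w : List (Fin d)) (Δ : Fin d → ℝ) (a c : ℝ) (S : ℕ → ℝ) :
    Continuous fun u => ∑ j ∈ Finset.range (w.length + 1),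
      ((w.take j).map Δ).prod * ((c - u) / (c - a)) ^ j / (Nat.factorial j : ℝ) * S j := by
  apply continuous_finset_sum
  intro j _
  exact (continuous_const.mul
    (((continuous_const.sub continuous_id).div_const (c - a)).pow j)).div_const _ |>.mul
    continuous_const

/-- The explicit formula for the signature coordinates on an affine segment. -/
lemma seg_formula {d : ℕ} (x : ℝ → Fin d → ℝ) (b a c : ℝ) (hac : a < c)
    (X0 Δ : Fin d → ℝ)
    (hx : ∀ s ∈ Set.Icc a c, x s = X0 + ((s - a) / (c - a)) • Δ)
    (hInt : ∀ (w : List (Fin d)) (i : Fin d),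
      IntervalIntegrable (fun u => deriv (fun r => x r i) u * sigCoord x b w u) volume c b) :
    ∀ (w : List (Fin d)), ∀ s ∈ Set.Icc a c,
      sigCoord x b w s = ∑ j ∈ Finset.range (w.length + 1),
        ((w.take j).map Δ).prod * ((c - s) / (c - a)) ^ j / (Nat.factorial j : ℝ)
          * sigCoord x b (w.drop j) c := by
  have hca : c - a ≠ 0 := sub_ne_zero.mpr (ne_of_gt hac)
  intro w
  induction w with
  | nil =>
    intro s hs
    simp [sigCoord]
  | cons i w ih =>
    intro s hs
    set φ : ℝ → ℝ := fun u => ∑ j ∈ Finset.range (w.length + 1),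
      ((w.take j).map Δ).prod * ((c - u) / (c - a)) ^ j / (Nat.factorial j : ℝ)
        * sigCoord x b (w.drop j) c with hφdef
    have hφ : Continuous φ := seg_phi_cont w Δ a c _
    have hkey := seg_key x b a c hac X0 Δ hx i w φ hφ ih s hs
    have hsplit := intervalIntegral.integral_add_adjacent_intervals hkey.1 (hInt w i)
    have lhs_eq : sigCoord x b (i :: w) s
        = (∫ u in s..c, Δ i / (c - a) * φ u) + sigCoord x b (i :: w) c := by
      show (∫ u in s..b, deriv (fun r => x r i) u * sigCoord x b w u) = _
      rw [← hsplit, hkey.2]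
      rfl
    rw [lhs_eq]
    have hint1 : (∫ u in s..c, Δ i / (c - a) * φ u)
        = ∑ j ∈ Finset.range (w.length + 1),
          Δ i / (c - a) * ((((w.take j).map Δ).prod / ((c - a) ^ j * (Nat.factorial j : ℝ))
            * sigCoord x b (w.drop j) c) * ((c - s) ^ (j + 1) / ((j : ℝ) + 1))) := by
      rw [intervalIntegral.integral_const_mul]
      have hφint : (∫ u in s..c, φ u)
          = ∑ j ∈ Finset.range (w.length + 1),
            (((w.take j).map Δ).prod / ((c - a) ^ j * (Nat.factorial j : ℝ))
              * sigCoord x b (w.drop j) c) * ((c - s) ^ (j + 1) / ((j : ℝ) + 1)) := by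
        simp only [hφdef]
        rw [intervalIntegral.integral_finset_sum]
        · apply Finset.sum_congr rfl
          intro j _
          have hterm : (fun u => ((w.take j).map Δ).prod * ((c - u) / (c - a)) ^ j
                / (Nat.factorial j : ℝ) * sigCoord x b (w.drop j) c)
              = fun u => (((w.take j).map Δ).prod / ((c - a) ^ j * (Nat.factorial j : ℝ))
                * sigCoord x b (w.drop j) c) * (c - u) ^ j := by
            funext u
            rw [div_pow]
            ring
          rw [hterm, intervalIntegral.integral_const_mul]
          congr 1
          rw [intervalIntegral.integral_comp_sub_left (fun y => y ^ j) c]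
          simp [integral_pow]
        · intro j _
          exact ((continuous_const.mul
            (((continuous_const.sub continuous_id).div_const (c - a)).pow j)).div_const _
            |>.mul continuous_const).intervalIntegrable s c
      rw [hφint, Finset.mul_sum]
    rw [hint1]
    conv_rhs => rw [show (i :: w).length + 1 = (w.length + 1) + 1 from rfl,
      Finset.sum_range_succ']
    congr 1
    · apply Finset.sum_congr rfl
      intro j hj
      simp only [List.take_succ_cons, List.drop_succ_cons, List.map_cons, List.prod_cons,
        Nat.factorial_succ, div_pow]
      have hfact : (Nat.factorial j : ℝ) ≠ 0 := Nat.cast_ne_zero.mpr (Nat.factorial_ne_zero j)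
      have hj1 : ((j : ℝ) + 1) ≠ 0 := by positivity
      have hcap : (c - a) ^ j ≠ 0 := pow_ne_zero _ hca
      push_cast
      field_simp
      ring
    · simp

/-- Summing over `antidiagonalTuple (L+1) n` can be done by first summing over
the first coordinate. -/
lemma sum_adT_succ {M : Type*} [AddCommMonoid M] (L n : ℕ) (f : (Fin (L + 1) → ℕ) → M) :
    ∑ k ∈ Finset.Nat.antidiagonalTuple (L + 1) n, f k
      = ∑ j ∈ Finset.range (n + 1), ∑ k ∈ Finset.Nat.antidiagonalTuple L (n - j),
          f (Fin.cons j k) := by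
  rw [Finset.sum_sigma']
  refine Finset.sum_nbij' (fun k => ⟨k 0, Fin.tail k⟩) (fun p => Fin.cons p.1 p.2)
    ?_ ?_ ?_ ?_ ?_
  · intro k hk
    rw [Finset.Nat.mem_antidiagonalTuple] at hk
    rw [Fin.sum_univ_succ] at hk
    simp only [Finset.mem_sigma, Finset.mem_range, Finset.Nat.mem_antidiagonalTuple]
    constructor
    · omega
    · show ∑ i, Fin.tail k i = n - k 0
      unfold Fin.tail
      omega
  · rintro ⟨j, k⟩ hp
    simp only [Finset.mem_sigma, Finset.mem_range, Finset.Nat.mem_antidiagonalTuple] at hp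
    rw [Finset.Nat.mem_antidiagonalTuple, Fin.sum_univ_succ]
    simp only [Fin.cons_zero, Fin.cons_succ]
    omega
  · intro k _
    exact Fin.cons_self_tail k
  · rintro ⟨j, k⟩ _
    simp [Fin.tail_cons]
  · intro k _
    rw [Fin.cons_self_tail]

/-- The recursive expression `rhsL` agrees with the sum over antidiagonal tuples. -/
lemma rhsL_eq {d L : ℕ} (v : Fin L → Fin d → ℝ) (w : List (Fin d)) :
    rhsL (List.ofFn v) w =
      ∑ k ∈ Finset.Nat.antidiagonalTuple L w.length,
        ∏ ℓ : Fin L,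
          (((w.drop (∑ m ∈ Finset.univ.filter (· < ℓ), k m)).take (k ℓ)).map
              (fun i => v ℓ i)).prod
            / (Nat.factorial (k ℓ) : ℝ) := by
  induction L generalizing w with
  | zero =>
    cases w with
    | nil => simp [rhsL]
    | cons i w => simp [rhsL]
  | succ L IH =>
    rw [List.ofFn_succ]
    show (∑ j ∈ Finset.range (w.length + 1),
        ((w.take j).map (v 0)).prod / (Nat.factorial j : ℝ)
          * rhsL (List.ofFn fun i => v i.succ) (w.drop j)) = _
    rw [sum_adT_succ L w.length]
    apply Finset.sum_congr rfl
    intro j hj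
    rw [IH, Finset.mul_sum, List.length_drop]
    apply Finset.sum_congr rfl
    intro k hk
    rw [Fin.prod_univ_succ]
    have h0 : (Finset.univ.filter (· < (0 : Fin (L + 1)))) = (∅ : Finset (Fin (L + 1))) := by
      ext m
      simp [Fin.not_lt_zero]
    have hoff : ∀ m : Fin L,
        (∑ p ∈ Finset.univ.filter (· < Fin.succ m), Fin.cons j k p)
          = j + ∑ p ∈ Finset.univ.filter (· < m), k p := by
      intro m
      rw [Finset.sum_filter, Finset.sum_filter, Fin.sum_univ_succ]
      simp [Fin.cons_zero, Fin.cons_succ, Fin.succ_lt_succ_iff, Fin.succ_pos]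
    congr 1
    · rw [h0]
      simp
    · apply Finset.prod_congr rfl
      intro m _
      rw [hoff m]
      simp only [Fin.cons_succ]
      have hdd : w.drop (j + ∑ p ∈ Finset.univ.filter (· < m), k p)
          = (w.drop j).drop (∑ p ∈ Finset.univ.filter (· < m), k p) := by
        rw [List.drop_drop, Nat.add_comm]
      rw [hdd]

/-- The signature of a piecewise linear path is the tensor product of the
tensor exponentials of its increments: if `x` is the piecewise linear path
interpolating the points `X 0, X 1, …, X L` at times `t 0 < t 1 < ⋯ < t L`,
then for every `n ≥ 0`,
`S(x)^{(n)} = Σ_{k₁+⋯+k_L = n} (Δx¹)^{⊗k₁}/k₁! ⊗ ⋯ ⊗ (Δx^L)^{⊗k_L}/k_L!`,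
where `Δx^ℓ = X ℓ - X (ℓ-1)`.  In coordinates: the coordinate indexed by a word
`w` of length `n` is the sum, over all tuples `(k₁, …, k_L)` of non-negative
integers summing to `n`, of the product over `ℓ` of
`(∏_{i ∈ (ℓ-th chunk of w of length k_ℓ)} (Δx^ℓ)_i) / k_ℓ!`,
where the `ℓ`-th chunk starts at position `k₁ + ⋯ + k_{ℓ-1}`. -/
theorem signature_of_piecewise_linear_path {d L : ℕ}
    (t : Fin (L + 1) → ℝ) (ht : StrictMono t)
    (X : Fin (L + 1) → Fin d → ℝ) (x : ℝ → Fin d → ℝ)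
    (hx : ∀ ℓ : Fin L, ∀ s ∈ Set.Icc (t ℓ.castSucc) (t ℓ.succ),
      x s = X ℓ.castSucc +
        ((s - t ℓ.castSucc) / (t ℓ.succ - t ℓ.castSucc)) • (X ℓ.succ - X ℓ.castSucc)) :
    ∀ (n : ℕ) (w : List (Fin d)), w.length = n →
      sigCoord x (t (Fin.last L)) w (t 0) =
        ∑ k ∈ Finset.Nat.antidiagonalTuple L n,
          ∏ ℓ : Fin L,
            (((w.drop (∑ m ∈ Finset.univ.filter (· < ℓ), k m)).take (k ℓ)).map
                (fun i => (X ℓ.succ - X ℓ.castSucc) i)).prod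
              / (Nat.factorial (k ℓ)) := by
  set b := t (Fin.last L) with hb
  set v : Fin L → Fin d → ℝ := fun ℓ => X ℓ.succ - X ℓ.castSucc with hv
  have main : ∀ ℓ' : Fin (L + 1),
      (∀ (w : List (Fin d)) (i : Fin d),
        IntervalIntegrable (fun u => deriv (fun r => x r i) u * sigCoord x b w u)
          volume (t ℓ') b)
      ∧ ∀ w : List (Fin d), sigCoord x b w (t ℓ') = rhsL ((List.ofFn v).drop (ℓ' : ℕ)) w := by
    intro ℓ'
    induction ℓ' using Fin.reverseInduction with
    | last =>
      constructor
      · intro w i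
        exact IntervalIntegrable.refl
      · intro w
        have hdrop : (List.ofFn v).drop ((Fin.last L : Fin (L + 1)) : ℕ) = [] := by
          rw [show ((Fin.last L : Fin (L + 1)) : ℕ) = (List.ofFn v).length by simp,
            List.drop_length]
        rw [hdrop]
        cases w with
        | nil => simp [sigCoord, rhsL]
        | cons i w' =>
          show (∫ u in b..b, deriv (fun r => x r i) u * sigCoord x b w' u) = _
          rw [intervalIntegral.integral_same]
          simp [rhsL]
    | cast ℓ IH =>
      have hac : t ℓ.castSucc < t ℓ.succ := ht Fin.castSucc_lt_succ
      have hform := seg_formula x b (t ℓ.castSucc) (t ℓ.succ) hac (X ℓ.castSucc) (v ℓ)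
        (hx ℓ) IH.1
      have hIcc : t ℓ.castSucc ∈ Set.Icc (t ℓ.castSucc) (t ℓ.succ) := ⟨le_refl _, le_of_lt hac⟩
      have hdrop : (List.ofFn v).drop ((ℓ.castSucc : Fin (L + 1)) : ℕ)
          = v ℓ :: (List.ofFn v).drop ((ℓ.succ : Fin (L + 1)) : ℕ) := by
        rw [List.drop_eq_getElem_cons (by simpa using ℓ.isLt)]
        congr 1
        · simp
      constructor
      · intro w i
        exact ((seg_key x b (t ℓ.castSucc) (t ℓ.succ) hac (X ℓ.castSucc) (v ℓ) (hx ℓ) i w _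
          (seg_phi_cont w (v ℓ) (t ℓ.castSucc) (t ℓ.succ) _) (hform w) _ hIcc).1).trans
          (IH.1 w i)
      · intro w
        rw [hdrop]
        show sigCoord x b w (t ℓ.castSucc) = ∑ j ∈ Finset.range (w.length + 1),
          ((w.take j).map (v ℓ)).prod / (Nat.factorial j : ℝ)
            * rhsL ((List.ofFn v).drop ((ℓ.succ : Fin (L + 1)) : ℕ)) (w.drop j)
        rw [hform w _ hIcc]
        apply Finset.sum_congr rfl
        intro j _
        rw [← IH.2 (w.drop j), div_self (sub_ne_zero.mpr (ne_of_gt hac)), one_pow]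
        ring
  intro n w hw
  subst hw
  have h0 := (main 0).2 w
  rw [show ((0 : Fin (L + 1)) : ℕ) = 0 from rfl, List.drop_zero] at h0
  rw [h0, rhsL_eq]
end

section
/- (Reparameterisation invariance of the signature.) Let x : [a,b] → ℝ^d be a C¹ path and let φ : [c,d] → [a,b] be a C¹, strictly increasing bijection. Then for every k ≥ 0, S(x ∘ φ)^{(k)}_{[c,d]} = S(x)^{(k)}_{[a,b]}; that is, the signature represents paths up to reparameterisation. -/
open MeasureTheory

/-- **Reparameterisation invariance of the signature.**  Let `x` be a C¹ path
on `[a, b]` and let `φ : [c, e] → [a, b]` be a C¹, strictly increasing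
bijection.  Then for every `k ≥ 0`, `S(x ∘ φ)^{(k)}_{[c,e]} = S(x)^{(k)}_{[a,b]}`:
in coordinates, the signature coordinates of `x ∘ φ` over `[c, e]` and of `x`
over `[a, b]` agree for every word `w`. -/
theorem signature_reparameterisation_invariance {d : ℕ} (a b c e : ℝ)
    (hab : a ≤ b) (hce : c ≤ e)
    (x : ℝ → Fin d → ℝ) (hx : ContDiffOn ℝ 1 x (Set.Icc a b))
    (φ : ℝ → ℝ) (hφ : ContDiffOn ℝ 1 φ (Set.Icc c e))
    (hφmono : StrictMonoOn φ (Set.Icc c e))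
    (hφbij : Set.BijOn φ (Set.Icc c e) (Set.Icc a b)) :
    ∀ w : List (Fin d),
      sigCoord (fun t => x (φ t)) e w c = sigCoord x b w a := by
  intro w
  rcases eq_or_lt_of_le hce with hce' | hlt
  · -- degenerate case c = e : then a = b and both signatures are trivial
    subst hce'
    have hab' : a = b := by
      have h2 : b ∈ φ '' Set.Icc c c := hφbij.surjOn (Set.right_mem_Icc.mpr hab)
      have h3 : a ∈ φ '' Set.Icc c c := hφbij.surjOn (Set.left_mem_Icc.mpr hab)
      simp [Set.Icc_self] at h2 h3
      linarith
    cases w with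
    | nil => rfl
    | cons i w =>
      show (∫ u in c..c, _) = (∫ u in a..b, _)
      rw [hab', intervalIntegral.integral_same, intervalIntegral.integral_same]
  · -- main case c < e
    have hφc : φ c = a := by
      obtain ⟨t, ht, hφt⟩ := hφbij.surjOn (Set.left_mem_Icc.mpr hab)
      have h1 : φ c ≤ φ t := hφmono.monotoneOn (Set.left_mem_Icc.mpr hce) ht ht.1
      have h2 : a ≤ φ c := (hφbij.mapsTo (Set.left_mem_Icc.mpr hce)).1
      rw [hφt] at h1; linarith
    have hφe : φ e = b := by
      obtain ⟨t, ht, hφt⟩ := hφbij.surjOn (Set.right_mem_Icc.mpr hab)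
      have h1 : φ t ≤ φ e := hφmono.monotoneOn ht (Set.right_mem_Icc.mpr hce) ht.2
      have h2 : φ e ≤ b := (hφbij.mapsTo (Set.right_mem_Icc.mpr hce)).2
      rw [hφt] at h1; linarith
    have hab' : a < b := by
      rw [← hφc, ← hφe]
      exact hφmono (Set.left_mem_Icc.mpr hce) (Set.right_mem_Icc.mpr hce) hlt
    have hcd : UniqueDiffOn ℝ (Set.Icc c e) := uniqueDiffOn_Icc hlt
    have hudab : UniqueDiffOn ℝ (Set.Icc a b) := uniqueDiffOn_Icc hab'
    set φd := derivWithin φ (Set.Icc c e) with hφddef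
    have hφdcont : ContinuousOn φd (Set.Icc c e) :=
      hφ.continuousOn_derivWithin hcd le_rfl
    have hφdt : ∀ t ∈ Set.Ioo c e, HasDerivAt φ (φd t) t := by
      intro t ht
      have hnhds : Set.Icc c e ∈ nhds t := Icc_mem_nhds ht.1 ht.2
      have hdiff : DifferentiableAt ℝ φ t :=
        (hφ.differentiableOn one_ne_zero t (Set.Ioo_subset_Icc_self ht)).differentiableAt hnhds
      rw [hφddef, derivWithin_of_mem_nhds hnhds]
      exact hdiff.hasDerivAt
    have hxi : ∀ i, ContDiffOn ℝ 1 (fun s => x s i) (Set.Icc a b) :=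
      fun i => contDiffOn_pi.mp hx i
    set xd := fun (i : Fin d) => derivWithin (fun s => x s i) (Set.Icc a b) with hxddef
    have hxdcont : ∀ i, ContinuousOn (xd i) (Set.Icc a b) :=
      fun i => (hxi i).continuousOn_derivWithin hudab le_rfl
    have hxdt : ∀ i, ∀ v ∈ Set.Ioo a b, HasDerivAt (fun s => x s i) (xd i v) v := by
      intro i v hv
      have hnhds : Set.Icc a b ∈ nhds v := Icc_mem_nhds hv.1 hv.2
      have hdiff : DifferentiableAt ℝ (fun s => x s i) v :=
        ((hxi i).differentiableOn one_ne_zero v (Set.Ioo_subset_Icc_self hv)).differentiableAt hnhds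
      rw [hxddef]; simp only []
      rw [derivWithin_of_mem_nhds hnhds]
      exact hdiff.hasDerivAt
    have hne : ∀ p : ℝ, ∀ᵐ t : ℝ, t ≠ p := by
      intro p
      refine MeasureTheory.mem_ae_iff.mpr ?_
      have : {t : ℝ | t ≠ p}ᶜ = {p} := by ext t; simp
      rw [this]
      exact Real.volume_singleton
    have key : ∀ w : List (Fin d),
        ContinuousOn (fun u => sigCoord x b w u) (Set.Icc a b) ∧
        ∀ u ∈ Set.Icc c e,
          sigCoord (fun t => x (φ t)) e w u = sigCoord x b w (φ u) := by
      intro w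
      induction w with
      | nil => exact ⟨continuousOn_const, fun _ _ => rfl⟩
      | cons i w ih =>
        obtain ⟨ihcont, iheq⟩ := ih
        set g := fun v => xd i v * sigCoord x b w v with hgdef
        have hgcont : ContinuousOn g (Set.Icc a b) := (hxdcont i).mul ihcont
        have hgint : IntegrableOn g (Set.uIcc a b) := by
          rw [Set.uIcc_of_le hab]; exact hgcont.integrableOn_Icc
        have Feq : ∀ u ∈ Set.Icc a b, sigCoord x b (i :: w) u = ∫ t in u..b, g t := by
          intro u hu
          show (∫ t in u..b, deriv (fun s => x s i) t * sigCoord x b w t) = _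
          apply intervalIntegral.integral_congr_ae
          filter_upwards [hne b] with t htb ht
          rw [Set.uIoc_of_le hu.2] at ht
          have ht' : t ∈ Set.Ioo a b := ⟨lt_of_le_of_lt hu.1 ht.1, lt_of_le_of_ne ht.2 htb⟩
          rw [hgdef]
          congr 1
          exact (hxdt i t ht').deriv
        constructor
        · have := (intervalIntegral.continuousOn_primitive_interval_left hgint).congr
            (g := fun u => sigCoord x b (i :: w) u) ?_
          · rwa [Set.uIcc_of_le hab] at this
          · intro u hu
            rw [Set.uIcc_of_le hab] at hu
            exact Feq u hu
        · intro u hu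
          show (∫ t in u..e, deriv (fun s => x (φ s) i) t *
              sigCoord (fun t => x (φ t)) e w t) = _
          have step1 : (∫ t in u..e, deriv (fun s => x (φ s) i) t *
              sigCoord (fun t => x (φ t)) e w t) = ∫ t in u..e, φd t • g (φ t) := by
            apply intervalIntegral.integral_congr_ae
            filter_upwards [hne e] with t hte ht
            rw [Set.uIoc_of_le hu.2] at ht
            have ht' : t ∈ Set.Ioo c e := ⟨lt_of_le_of_lt hu.1 ht.1, lt_of_le_of_ne ht.2 hte⟩
            have hφt : φ t ∈ Set.Ioo a b := by
              constructor
              · rw [← hφc]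
                exact hφmono (Set.left_mem_Icc.mpr hce) (Set.Ioo_subset_Icc_self ht') ht'.1
              · rw [← hφe]
                exact hφmono (Set.Ioo_subset_Icc_self ht') (Set.right_mem_Icc.mpr hce) ht'.2
            have hchain : HasDerivAt (fun s => x (φ s) i) (xd i (φ t) * φd t) t :=
              (hxdt i (φ t) hφt).comp t (hφdt t ht')
            rw [hchain.deriv, iheq t (Set.Ioo_subset_Icc_self ht')]
            rw [hgdef]
            simp only [smul_eq_mul]
            ring
          rw [step1]
          have step2 : (∫ t in u..e, φd t • g (φ t)) = ∫ v in (φ u)..(φ e), g v := by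
            have hsub : Set.uIcc u e ⊆ Set.Icc c e := by
              rw [Set.uIcc_of_le hu.2]
              exact Set.Icc_subset_Icc hu.1 le_rfl
            have h1 : ContinuousOn φ (Set.uIcc u e) := hφ.continuousOn.mono hsub
            have h2 : ∀ t ∈ Set.Ioo (min u e) (max u e),
                HasDerivWithinAt φ (φd t) (Set.Ioi t) t := by
              intro t ht
              rw [min_eq_left hu.2, max_eq_right hu.2] at ht
              exact (hφdt t ⟨lt_of_le_of_lt hu.1 ht.1, ht.2⟩).hasDerivWithinAt
            have h3 : ContinuousOn φd (Set.uIcc u e) := hφdcont.mono hsub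
            have h4 : ContinuousOn g (φ '' Set.uIcc u e) := by
              apply hgcont.mono
              intro v hv
              obtain ⟨t, ht, rfl⟩ := hv
              exact hφbij.mapsTo (hsub ht)
            exact intervalIntegral.integral_comp_smul_deriv'' h1 h2 h3 h4
          rw [step2, hφe, ← Feq (φ u) (hφbij.mapsTo hu)]
    have := (key w).2 c (Set.left_mem_Icc.mpr hce)
    rwa [hφc] at this
end

section
/- (Exactness of the adjoint recurrence for backpropagation through the signature-kernel finite-difference scheme.) Fix positive integers L₁, L₂ and let Δ ∈ ℝ^{L₁ × L₂} (indexed by 0 ≤ i ≤ L₁−1, 0 ≤ j ≤ L₂−1). Define A(p) = 1 + p/2 + p²/12 and B(p) = 1 − p²/12, and define the grid k̂ : {0,…,L₁} × {0,…,L₂} → ℝ by the boundary conditions k̂_{i,0} = k̂_{0,j} = 1 and the recurrence k̂_{i+1,j+1} = (k̂_{i+1,j} + k̂_{i,j+1})·A(Δ_{i,j}) − k̂_{i,j}·B(Δ_{i,j}). Define the adjoint grid g : {1,…,L₁+1} × {1,…,L₂+1} → ℝ by g_{L₁,L₂} = 1, g_{i,j} = 0 whenever i > L₁ or j > L₂ with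 (i,j) ≠ (L₁,L₂), and for (i,j) with 1 ≤ i ≤ L₁, 1 ≤ j ≤ L₂, (i,j) ≠ (L₁,L₂): g_{i,j} = g_{i+1,j}·A(Δ_{i,j−1}) + g_{i,j+1}·A(Δ_{i−1,j}) − g_{i+1,j+1}·B(Δ_{i,j}), where any summand whose g-factor is zero is omitted (so out-of-range Δ-indices never contribute). Then k̂_{L₁,L₂} is a polynomial function of the entries of Δ, and for all 0 ≤ a ≤ L₁−1, 0 ≤ b ≤ L₂−1, its partial derivative satisfies ∂k̂_{L₁,L₂}/∂Δ_{a,b} = g_{a+1,b+1} · [ (k̂_{a+1,b} + k̂_{a,b+1})·(1/2 + Δ_{a,b}/6) + k̂_{a,b}·Δ_{a,b}/6 ]. -/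
/-- `Afun p = 1 + p/2 + p²/12`, the first coefficient of the second-order
finite-difference scheme for the signature-kernel Goursat PDE. -/
noncomputable def Afun (p : ℝ) : ℝ := 1 + p / 2 + p ^ 2 / 12

/-- `Bfun p = 1 - p²/12`, the second coefficient of the second-order
finite-difference scheme for the signature-kernel Goursat PDE. -/
noncomputable def Bfun (p : ℝ) : ℝ := 1 - p ^ 2 / 12

/-- The finite-difference grid `k̂` for the signature-kernel Goursat PDE:
boundary values `k̂_{i,0} = k̂_{0,j} = 1` and recurrence
`k̂_{i+1,j+1} = (k̂_{i+1,j} + k̂_{i,j+1})·A(Δ_{i,j}) − k̂_{i,j}·B(Δ_{i,j})`. -/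
noncomputable def khat (Δ : ℕ → ℕ → ℝ) : ℕ → ℕ → ℝ
  | _, 0 => 1
  | 0, _ + 1 => 1
  | i + 1, j + 1 =>
      (khat Δ (i + 1) j + khat Δ i (j + 1)) * Afun (Δ i j) -
        khat Δ i j * Bfun (Δ i j)

/-- The adjoint grid `g` for reverse-mode differentiation of the
finite-difference scheme on the `{0,…,L₁} × {0,…,L₂}` grid:
`g_{L₁,L₂} = 1`, `g_{i,j} = 0` whenever `i > L₁` or `j > L₂` (with
`(i,j) ≠ (L₁,L₂)`), and otherwise
`g_{i,j} = g_{i+1,j}·A(Δ_{i,j−1}) + g_{i,j+1}·A(Δ_{i−1,j}) − g_{i+1,j+1}·B(Δ_{i,j})`,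
in which any summand whose `g`-factor vanishes contributes `0`, so that
out-of-range `Δ`-indices never contribute. -/
noncomputable def gAdj (Δ : ℕ → ℕ → ℝ) (L₁ L₂ : ℕ) (i j : ℕ) : ℝ :=
  if L₁ < i ∨ L₂ < j then 0
  else if i = L₁ ∧ j = L₂ then 1
  else
    gAdj Δ L₁ L₂ (i + 1) j * Afun (Δ i (j - 1)) +
      gAdj Δ L₁ L₂ i (j + 1) * Afun (Δ (i - 1) j) -
      gAdj Δ L₁ L₂ (i + 1) (j + 1) * Bfun (Δ i j)
termination_by (L₁ + L₂) - (i + j)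
decreasing_by all_goals omega

lemma gAdj_out {Δ : ℕ → ℕ → ℝ} {L₁ L₂ i j : ℕ} (h : L₁ < i ∨ L₂ < j) :
    gAdj Δ L₁ L₂ i j = 0 := by
  rw [gAdj, if_pos h]

lemma gAdj_diag (Δ : ℕ → ℕ → ℝ) (L₁ L₂ : ℕ) : gAdj Δ L₁ L₂ L₁ L₂ = 1 := by
  rw [gAdj, if_neg (by omega), if_pos ⟨rfl, rfl⟩]

lemma gAdj_rec {Δ : ℕ → ℕ → ℝ} {L₁ L₂ i j : ℕ} (hi : i ≤ L₁) (hj : j ≤ L₂)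
    (h : ¬(i = L₁ ∧ j = L₂)) :
    gAdj Δ L₁ L₂ i j =
      gAdj Δ L₁ L₂ (i + 1) j * Afun (Δ i (j - 1)) +
        gAdj Δ L₁ L₂ i (j + 1) * Afun (Δ (i - 1) j) -
        gAdj Δ L₁ L₂ (i + 1) (j + 1) * Bfun (Δ i j) := by
  rw [gAdj, if_neg (by omega), if_neg h]

lemma khat_j0 (Δ : ℕ → ℕ → ℝ) (i : ℕ) : khat Δ i 0 = 1 := by
  cases i <;> rw [khat]

lemma khat_i0 (Δ : ℕ → ℕ → ℝ) (j : ℕ) : khat Δ 0 j = 1 := by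
  cases j <;> rw [khat]

lemma hasDerivAt_Afun (x : ℝ) : HasDerivAt Afun (1 / 2 + x / 6) x := by
  have h := ((hasDerivAt_const x (1 : ℝ)).add ((hasDerivAt_id x).div_const 2)).add
    ((hasDerivAt_pow 2 x).div_const 12)
  refine h.congr_deriv ?_
  push_cast
  ring

lemma hasDerivAt_Bfun (x : ℝ) : HasDerivAt Bfun (-(x / 6)) x := by
  have h := (hasDerivAt_const x (1 : ℝ)).sub ((hasDerivAt_pow 2 x).div_const 12)
  refine h.congr_deriv ?_
  push_cast
  ring

lemma gAdj_forward (Δ : ℕ → ℕ → ℝ) (L₁ L₂ : ℕ) :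
    ∀ n s t, L₁ + L₂ + 2 ≤ s + t + n → ¬(s = L₁ + 1 ∧ t = L₂ + 1) →
      gAdj Δ (L₁ + 1) (L₂ + 1) s t =
        (gAdj Δ (L₁ + 1) L₂ s t + gAdj Δ L₁ (L₂ + 1) s t) * Afun (Δ L₁ L₂) -
          gAdj Δ L₁ L₂ s t * Bfun (Δ L₁ L₂) := by
  intro n
  induction n with
  | zero =>
    intro s t hn hne
    by_cases hout : L₁ + 1 < s ∨ L₂ + 1 < t
    · rw [gAdj_out hout, gAdj_out (show L₁ + 1 < s ∨ L₂ < t by omega),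
        gAdj_out (show L₁ < s ∨ L₂ + 1 < t by omega),
        gAdj_out (show L₁ < s ∨ L₂ < t by omega)]
      ring
    · exact absurd ⟨by omega, by omega⟩ hne
  | succ m ih =>
    intro s t hn hne
    by_cases hout : L₁ + 1 < s ∨ L₂ + 1 < t
    · rw [gAdj_out hout, gAdj_out (show L₁ + 1 < s ∨ L₂ < t by omega),
        gAdj_out (show L₁ < s ∨ L₂ + 1 < t by omega),
        gAdj_out (show L₁ < s ∨ L₂ < t by omega)]
      ring
    push_neg at hout
    obtain ⟨hs, ht⟩ := hout
    by_cases hs1 : s = L₁ + 1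
    · subst hs1
      -- then t ≤ L₂ by hne
      have ht' : t ≤ L₂ := by omega
      rw [gAdj_out (show L₁ < L₁ + 1 ∨ L₂ + 1 < t from Or.inl (by omega)),
        gAdj_out (show L₁ < L₁ + 1 ∨ L₂ < t from Or.inl (by omega))]
      by_cases htL : t = L₂
      · rw [htL,gAdj_rec (le_refl (L₁+1)) (by omega) (by omega),
          gAdj_out (show L₁ + 1 < L₁ + 1 + 1 ∨ L₂ + 1 < L₂ from Or.inl (by omega)),
          gAdj_out (show L₁ + 1 < L₁ + 1 + 1 ∨ L₂ + 1 < L₂ + 1 from Or.inl (by omega)),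
          gAdj_diag, gAdj_diag]
        simp
      · -- t < L₂
        rw [gAdj_rec (le_refl (L₁+1)) (by omega) (by omega),
          gAdj_out (show L₁ + 1 < L₁ + 1 + 1 ∨ L₂ + 1 < t from Or.inl (by omega)),
          gAdj_out (show L₁ + 1 < L₁ + 1 + 1 ∨ L₂ + 1 < t + 1 from Or.inl (by omega)),
          ih (L₁ + 1) (t + 1) (by omega) (by omega),
          gAdj_out (show L₁ < L₁ + 1 ∨ L₂ + 1 < t + 1 from Or.inl (by omega)),
          gAdj_out (show L₁ < L₁ + 1 ∨ L₂ < t + 1 from Or.inl (by omega)),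
          gAdj_rec (le_refl (L₁+1)) (le_of_lt (by omega : t < L₂)) (by omega),
          gAdj_out (show L₁ + 1 < L₁ + 1 + 1 ∨ L₂ < t from Or.inl (by omega)),
          gAdj_out (show L₁ + 1 < L₁ + 1 + 1 ∨ L₂ < t + 1 from Or.inl (by omega))]
        simp
        ring
    by_cases ht1 : t = L₂ + 1
    · subst ht1
      have hs' : s ≤ L₁ := by omega
      rw [gAdj_out (show L₁ + 1 < s ∨ L₂ < L₂ + 1 from Or.inr (by omega)),
        gAdj_out (show L₁ < s ∨ L₂ < L₂ + 1 from Or.inr (by omega))]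
      by_cases hsL : s = L₁
      · rw [hsL,gAdj_rec (by omega) (le_refl (L₂+1)) (by omega),
          gAdj_out (show L₁ + 1 < L₁ ∨ L₂ + 1 < L₂ + 1 + 1 from Or.inr (by omega)),
          gAdj_out (show L₁ + 1 < L₁ + 1 ∨ L₂ + 1 < L₂ + 1 + 1 from Or.inr (by omega)),
          gAdj_diag, gAdj_diag]
        simp
      · rw [gAdj_rec (by omega) (le_refl (L₂+1)) (by omega),
          gAdj_out (show L₁ + 1 < s ∨ L₂ + 1 < L₂ + 1 + 1 from Or.inr (by omega)),
          gAdj_out (show L₁ + 1 < s + 1 ∨ L₂ + 1 < L₂ + 1 + 1 from Or.inr (by omega)),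
          ih (s + 1) (L₂ + 1) (by omega) (by omega),
          gAdj_out (show L₁ + 1 < s + 1 ∨ L₂ < L₂ + 1 from Or.inr (by omega)),
          gAdj_out (show L₁ < s + 1 ∨ L₂ < L₂ + 1 from Or.inr (by omega)),
          gAdj_rec (le_of_lt (by omega : s < L₁)) (by omega) (by omega),
          gAdj_out (show L₁ < s ∨ L₂ + 1 < L₂ + 1 + 1 from Or.inr (by omega)),
          gAdj_out (show L₁ < s + 1 ∨ L₂ + 1 < L₂ + 1 + 1 from Or.inr (by omega))]
        simp
        ring
    -- now s ≤ L₁, t ≤ L₂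
    have hs' : s ≤ L₁ := by omega
    have ht' : t ≤ L₂ := by omega
    by_cases hdiag : s = L₁ ∧ t = L₂
    · obtain ⟨hd1, hd2⟩ := hdiag
      rw [hd1, hd2]
      have e1 : gAdj Δ (L₁ + 1) (L₂ + 1) (L₁ + 1) L₂ = Afun (Δ L₁ L₂) := by
        rw [gAdj_rec (show L₁ + 1 ≤ L₁ + 1 from le_rfl) (show L₂ ≤ L₂ + 1 by omega)
            (by omega),
          gAdj_out (show L₁ + 1 < L₁ + 1 + 1 ∨ L₂ + 1 < L₂ from Or.inl (by omega)),
          gAdj_out (show L₁ + 1 < L₁ + 1 + 1 ∨ L₂ + 1 < L₂ + 1 from Or.inl (by omega)),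
          gAdj_diag]
        simp
      have e2 : gAdj Δ (L₁ + 1) (L₂ + 1) L₁ (L₂ + 1) = Afun (Δ L₁ L₂) := by
        rw [gAdj_rec (show L₁ ≤ L₁ + 1 by omega) (show L₂ + 1 ≤ L₂ + 1 from le_rfl)
            (by omega),
          gAdj_out (show L₁ + 1 < L₁ ∨ L₂ + 1 < L₂ + 1 + 1 from Or.inr (by omega)),
          gAdj_out (show L₁ + 1 < L₁ + 1 ∨ L₂ + 1 < L₂ + 1 + 1 from Or.inr (by omega)),
          gAdj_diag]
        simp
      have r1 : gAdj Δ (L₁ + 1) L₂ L₁ L₂ = Afun (Δ L₁ (L₂ - 1)) := by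
        rw [gAdj_rec (show L₁ ≤ L₁ + 1 by omega) (show L₂ ≤ L₂ from le_rfl) (by omega),
          gAdj_out (show L₁ + 1 < L₁ ∨ L₂ < L₂ + 1 from Or.inr (by omega)),
          gAdj_out (show L₁ + 1 < L₁ + 1 ∨ L₂ < L₂ + 1 from Or.inr (by omega)),
          gAdj_diag]
        ring
      have r2 : gAdj Δ L₁ (L₂ + 1) L₁ L₂ = Afun (Δ (L₁ - 1) L₂) := by
        rw [gAdj_rec (show L₁ ≤ L₁ from le_rfl) (show L₂ ≤ L₂ + 1 by omega) (by omega),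
          gAdj_out (show L₁ < L₁ + 1 ∨ L₂ + 1 < L₂ from Or.inl (by omega)),
          gAdj_out (show L₁ < L₁ + 1 ∨ L₂ + 1 < L₂ + 1 from Or.inl (by omega)),
          gAdj_diag]
        ring
      rw [gAdj_rec (show L₁ ≤ L₁ + 1 by omega) (show L₂ ≤ L₂ + 1 by omega) (by omega),
        e1, e2, gAdj_diag, r1, r2, gAdj_diag]
      ring
    · rw [gAdj_rec (by omega) (by omega) (by omega),
        ih (s + 1) t (by omega) (by omega),
        ih s (t + 1) (by omega) (by omega),
        ih (s + 1) (t + 1) (by omega) (by omega),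
        gAdj_rec (by omega : s ≤ L₁ + 1) ht' (by omega),
        gAdj_rec hs' (by omega : t ≤ L₂ + 1) (by omega),
        gAdj_rec hs' ht' hdiag]
      ring

noncomputable def Cval (Δ : ℕ → ℕ → ℝ) (a b : ℕ) : ℝ :=
  (khat Δ (a + 1) b + khat Δ a (b + 1)) * (1 / 2 + Δ a b / 6) + khat Δ a b * (Δ a b / 6)

lemma khat_hasDerivAt (Δ : ℕ → ℕ → ℝ) (a b : ℕ) :
    ∀ n i j, i + j ≤ n →
      HasDerivAt
        (fun v : ℝ => khat (fun i' j' => if i' = a ∧ j' = b then v else Δ i' j') i j)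
        (gAdj Δ i j (a + 1) (b + 1) * Cval Δ a b) (Δ a b) := by
  intro n
  induction n with
  | zero =>
    intro i j hij
    have hi : i = 0 := by omega
    have hj : j = 0 := by omega
    subst hi; subst hj
    rw [gAdj_out (Or.inl (Nat.succ_pos a)), zero_mul]
    simp only [khat_j0]
    exact hasDerivAt_const _ _
  | succ m ih =>
    intro i j hij
    rcases j with _ | j
    · rw [gAdj_out (Or.inr (Nat.succ_pos b)), zero_mul]
      simp only [khat_j0]
      exact hasDerivAt_const _ _
    rcases i with _ | i
    · rw [gAdj_out (Or.inl (Nat.succ_pos a)), zero_mul]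
      simp only [khat_i0]
      exact hasDerivAt_const _ _
    have h1 := ih (i + 1) j (by omega)
    have h2 := ih i (j + 1) (by omega)
    have h3 := ih i j (by omega)
    by_cases hab : i = a ∧ j = b
    · obtain ⟨rfl, rfl⟩ := hab
      have hupd : (fun i' j' => if i' = i ∧ j' = j then Δ i j else Δ i' j') = Δ := by
        funext i' j'
        split
        · rename_i h; rw [h.1, h.2]
        · rfl
      have H := ((h1.add h2).mul (hasDerivAt_Afun (Δ i j))).sub
        (h3.mul (hasDerivAt_Bfun (Δ i j)))
      rw [hupd] at H
      have hg1 : gAdj Δ (i + 1) j (i + 1) (j + 1) = 0 := gAdj_out (Or.inr (by omega))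
      have hg2 : gAdj Δ i (j + 1) (i + 1) (j + 1) = 0 := gAdj_out (Or.inl (by omega))
      have hg3 : gAdj Δ i j (i + 1) (j + 1) = 0 := gAdj_out (Or.inl (by omega))
      rw [hg1, hg2, hg3] at H
      have Hfun : (fun v : ℝ =>
          khat (fun i' j' => if i' = i ∧ j' = j then v else Δ i' j') (i + 1) (j + 1)) =
          (fun v : ℝ =>
            (khat (fun i' j' => if i' = i ∧ j' = j then v else Δ i' j') (i + 1) j +
                khat (fun i' j' => if i' = i ∧ j' = j then v else Δ i' j') i (j + 1)) *
              Afun v -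
              khat (fun i' j' => if i' = i ∧ j' = j then v else Δ i' j') i j * Bfun v) := by
        funext v
        rw [khat, if_pos ⟨rfl, rfl⟩]
      rw [Hfun, gAdj_diag]
      refine H.congr_deriv ?_
      simp only [Cval, Pi.add_apply, hupd]
      ring
    · have H := ((h1.add h2).mul_const (Afun (Δ i j))).sub (h3.mul_const (Bfun (Δ i j)))
      have Hfun : (fun v : ℝ =>
          khat (fun i' j' => if i' = a ∧ j' = b then v else Δ i' j') (i + 1) (j + 1)) =
          (fun v : ℝ =>
            (khat (fun i' j' => if i' = a ∧ j' = b then v else Δ i' j') (i + 1) j +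
                khat (fun i' j' => if i' = a ∧ j' = b then v else Δ i' j') i (j + 1)) *
              Afun (Δ i j) -
              khat (fun i' j' => if i' = a ∧ j' = b then v else Δ i' j') i j *
                Bfun (Δ i j)) := by
        funext v
        rw [khat, if_neg hab]
      rw [Hfun, gAdj_forward Δ i j (i + j + 2) (a + 1) (b + 1) (by omega)
        (by omega)]
      refine H.congr_deriv ?_
      ring

lemma khat_poly (L₁ L₂ : ℕ) :
    ∀ n i j, i + j ≤ n → i ≤ L₁ → j ≤ L₂ →
      ∃ P : MvPolynomial (Fin L₁ × Fin L₂) ℝ,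
        ∀ Δ' : ℕ → ℕ → ℝ, khat Δ' i j =
          MvPolynomial.eval (fun p => Δ' p.1.val p.2.val) P := by
  intro n
  induction n with
  | zero =>
    intro i j hij _ _
    have hi : i = 0 := by omega
    have hj : j = 0 := by omega
    subst hi; subst hj
    exact ⟨1, fun Δ' => by simp [khat_j0]⟩
  | succ m ih =>
    intro i j hij hi hj
    rcases j with _ | j
    · exact ⟨1, fun Δ' => by simp [khat_j0]⟩
    rcases i with _ | i
    · exact ⟨1, fun Δ' => by simp [khat_i0]⟩
    obtain ⟨P₁, hP₁⟩ := ih (i + 1) j (by omega) hi (by omega)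
    obtain ⟨P₂, hP₂⟩ := ih i (j + 1) (by omega) (by omega) hj
    obtain ⟨P₃, hP₃⟩ := ih i j (by omega) (by omega) (by omega)
    set X : MvPolynomial (Fin L₁ × Fin L₂) ℝ :=
      MvPolynomial.X (⟨i, by omega⟩, ⟨j, by omega⟩) with hX
    refine ⟨(P₁ + P₂) * (1 + MvPolynomial.C (1/2 : ℝ) * X + MvPolynomial.C (1/12 : ℝ) * X ^ 2)
      - P₃ * (1 - MvPolynomial.C (1/12 : ℝ) * X ^ 2), fun Δ' => ?_⟩
    rw [khat, hP₁ Δ', hP₂ Δ', hP₃ Δ']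
    simp only [map_add, map_mul, map_sub, map_one, map_pow, MvPolynomial.eval_C,
      MvPolynomial.eval_X, hX, Afun, Bfun]
    ring


/-- **Exactness of the adjoint recurrence for backpropagation through the
signature-kernel finite-difference scheme.**  For fixed `L₁, L₂ ≥ 1` and
`Δ ∈ ℝ^{L₁ × L₂}`, the final grid value `k̂_{L₁,L₂}` is a polynomial function
of the entries `Δ_{a,b}` (`0 ≤ a ≤ L₁−1`, `0 ≤ b ≤ L₂−1`), and its partial
derivative with respect to `Δ_{a,b}` equals
`g_{a+1,b+1} · [(k̂_{a+1,b} + k̂_{a,b+1})·(1/2 + Δ_{a,b}/6) + k̂_{a,b}·Δ_{a,b}/6]`,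
where `g` is the adjoint grid. -/
theorem adjoint_backprop_exact_gradient (L₁ L₂ : ℕ) (hL₁ : 0 < L₁)
    (hL₂ : 0 < L₂) (Δ : ℕ → ℕ → ℝ) :
    (∃ P : MvPolynomial (Fin L₁ × Fin L₂) ℝ,
      ∀ Δ' : ℕ → ℕ → ℝ, khat Δ' L₁ L₂ =
        MvPolynomial.eval (fun p => Δ' p.1.val p.2.val) P) ∧
    ∀ a < L₁, ∀ b < L₂,
      HasDerivAt
        (fun v : ℝ => khat (fun i j => if i = a ∧ j = b then v else Δ i j) L₁ L₂)
        (gAdj Δ L₁ L₂ (a + 1) (b + 1) *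
          ((khat Δ (a + 1) b + khat Δ a (b + 1)) * (1 / 2 + Δ a b / 6) +
            khat Δ a b * (Δ a b / 6)))
        (Δ a b) := by
  constructor
  · exact khat_poly L₁ L₂ (L₁ + L₂) L₁ L₂ le_rfl le_rfl le_rfl
  · intro a _ b _
    exact khat_hasDerivAt Δ a b (L₁ + L₂) L₁ L₂ le_rfl
end

section
/- (Adjoint recurrence for the intermediate sensitivities.) In the setting of the signature-kernel finite-difference scheme, fix L₁, L₂ ≥ 1 and Δ ∈ ℝ^{L₁ × L₂}, let A(p) = 1 + p/2 + p²/12 and B(p) = 1 − p²/12, and let k̂ be defined by k̂_{i,0} = k̂_{0,j} = 1 and k̂_{i+1,j+1} = (k̂_{i+1,j} + k̂_{i,j+1})·A(Δ_{i,j}) − k̂_{i,j}·B(Δ_{i,j}). For 1 ≤ i ≤ L₁ and 1 ≤ j ≤ L₂, regard k̂_{L₁,L₂} as a function of the single intermediate value k̂_{i,j} by the following construction: introduce a perturbation parameter ε, set k̂^ε_{a,b} = k̂_{a,b} for all grid points (a,b) that are not ≥ (i,j) componentwise, set k̂^ε_{i,j} = k̂_{i,j} + ε, and propagate the recurrence forward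 for all (a,b) with a ≥ i, b ≥ j, (a,b) ≠ (i,j). Define h_{i,j} = d/dε|_{ε=0} k̂^ε_{L₁,L₂}. Then h_{L₁,L₂} = 1 and for (i,j) ≠ (L₁,L₂): h_{i,j} = h_{i+1,j}·A(Δ_{i,j−1}) + h_{i,j+1}·A(Δ_{i−1,j}) − h_{i+1,j+1}·B(Δ_{i,j}), where h_{a,b} is taken to be 0 whenever a > L₁ or b > L₂ (and any summand containing such a factor is omitted, so out-of-range Δ-indices never contribute). -/
/-- The grid obtained from `k̂` by perturbing the single intermediate value at
position `(i, j)` (with `1 ≤ i`, `1 ≤ j`) by `ε` and propagating the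
recurrence forward: `k̂^ε_{a,b} = k̂_{a,b}` for grid points `(a,b)` that are not
componentwise `≥ (i,j)`, `k̂^ε_{i,j} = k̂_{i,j} + ε`, and for `(a,b)` with
`a ≥ i`, `b ≥ j`, `(a,b) ≠ (i,j)` the recurrence
`k̂^ε_{a,b} = (k̂^ε_{a,b−1} + k̂^ε_{a−1,b})·A(Δ_{a−1,b−1}) − k̂^ε_{a−1,b−1}·B(Δ_{a−1,b−1})`. -/
noncomputable def khatPert (Δ : ℕ → ℕ → ℝ) (i j : ℕ) (ε : ℝ) (a b : ℕ) : ℝ :=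
  if a = i ∧ b = j then khat Δ i j + ε
  else if i ≤ a ∧ j ≤ b ∧ 1 ≤ a ∧ 1 ≤ b then
    (khatPert Δ i j ε a (b - 1) + khatPert Δ i j ε (a - 1) b) *
        Afun (Δ (a - 1) (b - 1)) -
      khatPert Δ i j ε (a - 1) (b - 1) * Bfun (Δ (a - 1) (b - 1))
  else khat Δ a b
termination_by a + b
decreasing_by all_goals omega

/-- The intermediate sensitivity `h_{i,j} = d/dε|_{ε=0} k̂^ε_{L₁,L₂}`: the
derivative of the final grid value with respect to a perturbation of the
intermediate grid value `k̂_{i,j}`. -/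
noncomputable def hSens (Δ : ℕ → ℕ → ℝ) (L₁ L₂ : ℕ) (i j : ℕ) : ℝ :=
  deriv (fun ε : ℝ => khatPert Δ i j ε L₁ L₂) 0

noncomputable def coefc (Δ : ℕ → ℕ → ℝ) (i j : ℕ) (a b : ℕ) : ℝ :=
  if a = i ∧ b = j then 1
  else if i ≤ a ∧ j ≤ b ∧ 1 ≤ a ∧ 1 ≤ b then
    (coefc Δ i j a (b - 1) + coefc Δ i j (a - 1) b) * Afun (Δ (a - 1) (b - 1)) -
      coefc Δ i j (a - 1) (b - 1) * Bfun (Δ (a - 1) (b - 1))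
  else 0
termination_by a + b
decreasing_by all_goals omega

lemma khat_rec (Δ : ℕ → ℕ → ℝ) (a b : ℕ) (ha : 1 ≤ a) (hb : 1 ≤ b) :
    khat Δ a b = (khat Δ a (b - 1) + khat Δ (a - 1) b) * Afun (Δ (a - 1) (b - 1)) -
      khat Δ (a - 1) (b - 1) * Bfun (Δ (a - 1) (b - 1)) := by
  obtain ⟨a', rfl⟩ : ∃ a', a = a' + 1 := ⟨a - 1, by omega⟩
  obtain ⟨b', rfl⟩ : ∃ b', b = b' + 1 := ⟨b - 1, by omega⟩
  simp [khat]

lemma coefc_self (Δ : ℕ → ℕ → ℝ) (i j : ℕ) : coefc Δ i j i j = 1 := by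
  rw [coefc]; simp
lemma coefc_out (Δ : ℕ → ℕ → ℝ) (i j a b : ℕ) (h : ¬(i ≤ a ∧ j ≤ b)) :
    coefc Δ i j a b = 0 := by
  rw [coefc, if_neg (by omega), if_neg (by omega)]
lemma coefc_rec (Δ : ℕ → ℕ → ℝ) (i j a b : ℕ) (hi : i ≤ a) (hj : j ≤ b)
    (ha : 1 ≤ a) (hb : 1 ≤ b) (hne : ¬(a = i ∧ b = j)) :
    coefc Δ i j a b =
      (coefc Δ i j a (b - 1) + coefc Δ i j (a - 1) b) * Afun (Δ (a - 1) (b - 1)) -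
        coefc Δ i j (a - 1) (b - 1) * Bfun (Δ (a - 1) (b - 1)) := by
  rw [coefc, if_neg hne, if_pos ⟨hi, hj, ha, hb⟩]

lemma coefc_row (Δ : ℕ → ℕ → ℝ) (i j b : ℕ) (hi : 1 ≤ i) (hj : j ≤ b) :
    coefc Δ i j i (b + 1) = coefc Δ i j i b * Afun (Δ (i - 1) b) := by
  rw [coefc_rec Δ i j i (b+1) le_rfl (by omega) hi (by omega) (by omega)]
  simp only [Nat.add_sub_cancel]
  rw [coefc_out Δ i j (i-1) (b+1) (by omega), coefc_out Δ i j (i-1) b (by omega)]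
  simp

lemma coefc_col (Δ : ℕ → ℕ → ℝ) (i j a : ℕ) (hj : 1 ≤ j) (hi : i ≤ a) :
    coefc Δ i j (a + 1) j = coefc Δ i j a j * Afun (Δ a (j - 1)) := by
  rw [coefc_rec Δ i j (a+1) j (by omega) le_rfl (by omega) hj (by omega)]
  simp only [Nat.add_sub_cancel]
  rw [coefc_out Δ i j (a+1) (j-1) (by omega), coefc_out Δ i j a (j-1) (by omega)]
  simp

lemma coefc_shift_row (Δ : ℕ → ℕ → ℝ) (i j : ℕ) (hi : 1 ≤ i) :
    ∀ b, j + 1 ≤ b → coefc Δ i (j + 1) i b * Afun (Δ (i - 1) j) = coefc Δ i j i b := by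
  intro b hb
  induction b, hb using Nat.le_induction with
  | base =>
    rw [coefc_self]
    have := coefc_row Δ i j j hi le_rfl
    rw [this, coefc_self]
  | succ b hb IH =>
    rw [coefc_row Δ i (j+1) b hi hb, coefc_row Δ i j b hi (by omega)]
    calc coefc Δ i (j + 1) i b * Afun (Δ (i - 1) b) * Afun (Δ (i - 1) j)
        = coefc Δ i (j + 1) i b * Afun (Δ (i - 1) j) * Afun (Δ (i - 1) b) := by ring
      _ = coefc Δ i j i b * Afun (Δ (i - 1) b) := by rw [IH]

lemma coefc_shift_col (Δ : ℕ → ℕ → ℝ) (i j : ℕ) (hj : 1 ≤ j) :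
    ∀ a, i + 1 ≤ a → coefc Δ (i + 1) j a j * Afun (Δ i (j - 1)) = coefc Δ i j a j := by
  intro a ha
  induction a, ha using Nat.le_induction with
  | base =>
    rw [coefc_self]
    have := coefc_col Δ i j i hj le_rfl
    rw [this, coefc_self]
  | succ a ha IH =>
    rw [coefc_col Δ (i+1) j a hj ha, coefc_col Δ i j a hj (by omega)]
    calc coefc Δ (i + 1) j a j * Afun (Δ a (j - 1)) * Afun (Δ i (j - 1))
        = coefc Δ (i + 1) j a j * Afun (Δ i (j - 1)) * Afun (Δ a (j - 1)) := by ring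
      _ = coefc Δ i j a j * Afun (Δ a (j - 1)) := by rw [IH]

lemma pert_eq (Δ : ℕ → ℕ → ℝ) (i j : ℕ) (ε : ℝ) :
    ∀ n a b, a + b = n →
      khatPert Δ i j ε a b = khat Δ a b + ε * coefc Δ i j a b := by
  intro n
  induction n using Nat.strong_induction_on with
  | _ n IH =>
    intro a b hab
    by_cases h1 : a = i ∧ b = j
    · obtain ⟨rfl, rfl⟩ := h1
      rw [khatPert, coefc]
      simp
    · by_cases h2 : i ≤ a ∧ j ≤ b ∧ 1 ≤ a ∧ 1 ≤ b
      · rw [khatPert, if_neg h1, if_pos h2, coefc, if_neg h1, if_pos h2]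
        rw [IH (a + (b-1)) (by omega) a (b-1) rfl,
            IH ((a-1) + b) (by omega) (a-1) b rfl,
            IH ((a-1) + (b-1)) (by omega) (a-1) (b-1) rfl,
            khat_rec Δ a b h2.2.2.1 h2.2.2.2]
        ring
      · rw [khatPert, if_neg h1, if_neg h2, coefc, if_neg h1, if_neg h2]
        ring

lemma hSens_eq (Δ : ℕ → ℕ → ℝ) (L₁ L₂ i j : ℕ) :
    hSens Δ L₁ L₂ i j = coefc Δ i j L₁ L₂ := by
  unfold hSens
  have h : (fun ε : ℝ => khatPert Δ i j ε L₁ L₂)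
      = fun ε : ℝ => khat Δ L₁ L₂ + ε * coefc Δ i j L₁ L₂ :=
    funext fun ε => pert_eq Δ i j ε _ L₁ L₂ rfl
  rw [h]
  have := (((hasDerivAt_id (0:ℝ)).mul_const (coefc Δ i j L₁ L₂)).const_add
    (khat Δ L₁ L₂)).deriv
  simpa using this


lemma coefc_adj (Δ : ℕ → ℕ → ℝ) (i j : ℕ) (hi : 1 ≤ i) (hj : 1 ≤ j) :
    ∀ n a b, a + b = n → ¬(a = i ∧ b = j) →
      coefc Δ i j a b =
        coefc Δ (i + 1) j a b * Afun (Δ i (j - 1)) +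
          coefc Δ i (j + 1) a b * Afun (Δ (i - 1) j) -
            coefc Δ (i + 1) (j + 1) a b * Bfun (Δ i j) := by
  intro n
  induction n using Nat.strong_induction_on with
  | _ n IH =>
    intro a b hab hne
    by_cases h2 : i ≤ a ∧ j ≤ b
    · have ha : 1 ≤ a := by omega
      have hb : 1 ≤ b := by omega
      by_cases hai : a = i
      · subst hai
        have hbj : j + 1 ≤ b := by omega
        rw [← coefc_shift_row Δ a j hi b hbj,
            coefc_out Δ (a + 1) j a b (by omega),
            coefc_out Δ (a + 1) (j + 1) a b (by omega)]
        ring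
      · by_cases hbj : b = j
        · subst hbj
          have hai' : i + 1 ≤ a := by omega
          rw [← coefc_shift_col Δ i b hj a hai',
              coefc_out Δ i (b + 1) a b (by omega),
              coefc_out Δ (i + 1) (b + 1) a b (by omega)]
          ring
        · -- a > i, b > j
          by_cases hcorner : a = i + 1 ∧ b = j + 1
          · obtain ⟨rfl, rfl⟩ := hcorner
            rw [coefc_rec Δ i j (i + 1) (j + 1) (by omega) (by omega) (by omega)
              (by omega) (by omega)]
            simp only [Nat.add_sub_cancel]
            have e1 : coefc Δ i j (i + 1) j = Afun (Δ i (j - 1)) := by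
              rw [coefc_col Δ i j i hj le_rfl, coefc_self, one_mul]
            have e2 : coefc Δ i j i (j + 1) = Afun (Δ (i - 1) j) := by
              rw [coefc_row Δ i j j hi le_rfl, coefc_self, one_mul]
            have e3 : coefc Δ (i + 1) j (i + 1) (j + 1) = Afun (Δ i j) := by
              rw [coefc_row Δ (i + 1) j j (by omega) le_rfl, coefc_self, one_mul]
              simp only [Nat.add_sub_cancel]
            have e4 : coefc Δ i (j + 1) (i + 1) (j + 1) = Afun (Δ i j) := by
              rw [coefc_col Δ i (j + 1) i (by omega) le_rfl, coefc_self, one_mul]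
              simp only [Nat.add_sub_cancel]
            rw [e1, e2, e3, e4, coefc_self, coefc_self]
            ring
          · rw [coefc_rec Δ i j a b (by omega) (by omega) ha hb hne,
                coefc_rec Δ (i + 1) j a b (by omega) (by omega) ha hb (by omega),
                coefc_rec Δ i (j + 1) a b (by omega) (by omega) ha hb (by omega),
                coefc_rec Δ (i + 1) (j + 1) a b (by omega) (by omega) ha hb
                  (by omega),
                IH (a + (b - 1)) (by omega) a (b - 1) rfl (by omega),
                IH ((a - 1) + b) (by omega) (a - 1) b rfl (by omega),
                IH ((a - 1) + (b - 1)) (by omega) (a - 1) (b - 1) rfl (by omega)]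
            ring
    · rw [coefc_out Δ i j a b h2,
          coefc_out Δ (i + 1) j a b (by omega),
          coefc_out Δ i (j + 1) a b (by omega),
          coefc_out Δ (i + 1) (j + 1) a b (by omega)]
      ring

/-- **Adjoint recurrence for the intermediate sensitivities.**  With `k̂` the
finite-difference grid for `Δ ∈ ℝ^{L₁ × L₂}` and `h_{i,j}` the sensitivity of
`k̂_{L₁,L₂}` to a perturbation of the intermediate value `k̂_{i,j}`, one has
`h_{L₁,L₂} = 1` and, for `1 ≤ i ≤ L₁`, `1 ≤ j ≤ L₂` with `(i,j) ≠ (L₁,L₂)`,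
`h_{i,j} = h_{i+1,j}·A(Δ_{i,j−1}) + h_{i,j+1}·A(Δ_{i−1,j}) − h_{i+1,j+1}·B(Δ_{i,j})`,
where `h_{a,b}` is taken to be `0` whenever `a > L₁` or `b > L₂` (so that any
summand containing such a factor is omitted and out-of-range `Δ`-indices never
contribute). -/
theorem adjoint_recurrence_for_sensitivities (L₁ L₂ : ℕ) (hL₁ : 1 ≤ L₁)
    (hL₂ : 1 ≤ L₂) (Δ : ℕ → ℕ → ℝ) :
    hSens Δ L₁ L₂ L₁ L₂ = 1 ∧
    ∀ i j : ℕ, 1 ≤ i → i ≤ L₁ → 1 ≤ j → j ≤ L₂ → ¬(i = L₁ ∧ j = L₂) →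
      hSens Δ L₁ L₂ i j =
        (if L₁ < i + 1 then 0 else hSens Δ L₁ L₂ (i + 1) j) * Afun (Δ i (j - 1)) +
        (if L₂ < j + 1 then 0 else hSens Δ L₁ L₂ i (j + 1)) * Afun (Δ (i - 1) j) -
        (if L₁ < i + 1 ∨ L₂ < j + 1 then 0 else hSens Δ L₁ L₂ (i + 1) (j + 1)) *
          Bfun (Δ i j) := by
  constructor
  · rw [hSens_eq, coefc_self]
  · intro i j h1i hiL h1j hjL hne
    have t1 : (if L₁ < i + 1 then (0:ℝ) else hSens Δ L₁ L₂ (i + 1) j)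
        = coefc Δ (i + 1) j L₁ L₂ := by
      split_ifs with h
      · exact (coefc_out Δ (i + 1) j L₁ L₂ (by omega)).symm
      · rw [hSens_eq]
    have t2 : (if L₂ < j + 1 then (0:ℝ) else hSens Δ L₁ L₂ i (j + 1))
        = coefc Δ i (j + 1) L₁ L₂ := by
      split_ifs with h
      · exact (coefc_out Δ i (j + 1) L₁ L₂ (by omega)).symm
      · rw [hSens_eq]
    have t3 : (if L₁ < i + 1 ∨ L₂ < j + 1 then (0:ℝ)
          else hSens Δ L₁ L₂ (i + 1) (j + 1)) = coefc Δ (i + 1) (j + 1) L₁ L₂ := by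
      split_ifs with h
      · exact (coefc_out Δ (i + 1) (j + 1) L₁ L₂ (by omega)).symm
      · rw [hSens_eq]
    rw [t1, t2, t3, hSens_eq]
    exact coefc_adj Δ i j h1i h1j (L₁ + L₂) L₁ L₂ rfl (by omega)
end
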